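/- The complement in ℝ² of the union of m distinct lines has at most (m² + m + 2)/2 connected components. -/

import Mathlib

open scoped RealInnerProductSpace

private lemma line_param (ul : EuclideanSpace ℝ (Fin 2)) (hul : ul ≠ 0) (cl : ℝ) :
    ∃ p0 v : EuclideanSpace ℝ (Fin 2), ∀ r : EuclideanSpace ℝ (Fin 2),
      ⟪r, ul⟫ = cl → ∃ t : ℝ, p0 + t • v = r := by
  set A := ul 0 with hA
  set B := ul 1 with hB
  have hN : A ^ 2 + B ^ 2 ≠ 0 := by
    intro h
    apply hul
    have h1 : A = 0 := by nlinarith [sq_nonneg A, sq_nonneg B]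
    have h2 : B = 0 := by nlinarith [sq_nonneg A, sq_nonneg B]
    ext i
    fin_cases i
    · exact h1
    · exact h2
  refine ⟨(WithLp.equiv 2 (Fin 2 → ℝ)).symm ![cl * A / (A ^ 2 + B ^ 2), cl * B / (A ^ 2 + B ^ 2)],
    (WithLp.equiv 2 (Fin 2 → ℝ)).symm ![-B, A], ?_⟩
  intro r hr
  have hr' : r 0 * A + r 1 * B = cl := by
    simp [PiLp.inner_apply, RCLike.inner_apply, conj_trivial, Fin.sum_univ_two] at hr
    rw [hA, hB]; linear_combination hr
  refine ⟨(-B * r 0 + A * r 1) / (A ^ 2 + B ^ 2), ?_⟩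
  ext i
  fin_cases i
  · show cl * A / (A ^ 2 + B ^ 2) + ((-B * r 0 + A * r 1) / (A ^ 2 + B ^ 2)) * (-B) = r 0
    field_simp
    linear_combination (-A) * hr'
  · show cl * B / (A ^ 2 + B ^ 2) + ((-B * r 0 + A * r 1) / (A ^ 2 + B ^ 2)) * A = r 1
    field_simp
    linear_combination (-B) * hr'

private lemma oneD (n : ℕ) (a b : Fin n → ℝ) :
    Nat.card {σ : Fin n → Bool | ∃ t : ℝ, (∀ j, a j * t + b j ≠ 0) ∧
      ∀ j, σ j = decide (0 < a j * t + b j)} ≤ n + 1 := by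
  classical
  set S : Finset ℝ := Finset.image (fun j => -(b j) / a j) Finset.univ with hS
  have hScard : S.card ≤ n := le_trans Finset.card_image_le (by simp)
  -- key: equal cut-counts imply equal signs
  have key : ∀ t1 t2 : ℝ, (∀ j, a j * t1 + b j ≠ 0) → (∀ j, a j * t2 + b j ≠ 0) →
      (S.filter (· < t1)).card = (S.filter (· < t2)).card →
      ∀ j, (0 < a j * t1 + b j ↔ 0 < a j * t2 + b j) := by
    have main : ∀ t1 t2 : ℝ, t1 ≤ t2 → (∀ j, a j * t1 + b j ≠ 0) → (∀ j, a j * t2 + b j ≠ 0) →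
        (S.filter (· < t1)).card = (S.filter (· < t2)).card →
        ∀ j, (0 < a j * t1 + b j ↔ 0 < a j * t2 + b j) := by
      intro t1 t2 hle h1 h2 hcard j
      have hsub : S.filter (· < t1) ⊆ S.filter (· < t2) := by
        intro x hx
        rw [Finset.mem_filter] at hx ⊢
        exact ⟨hx.1, lt_of_lt_of_le hx.2 hle⟩
      have heq : S.filter (· < t1) = S.filter (· < t2) :=
        Finset.eq_of_subset_of_card_le hsub (le_of_eq hcard.symm)
      rcases eq_or_ne (a j) 0 with ha | ha
      · simp [ha]
      · set r : ℝ := -(b j) / a j with hr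
        have hmem : r ∈ S := Finset.mem_image.mpr ⟨j, Finset.mem_univ j, rfl⟩
        have hroot : a j * r + b j = 0 := by
          rw [hr]; field_simp; ring
        have hrt : r < t1 ↔ r < t2 := by
          constructor
          · intro h'
            have : r ∈ S.filter (· < t2) := heq ▸ (Finset.mem_filter.mpr ⟨hmem, h'⟩)
            exact (Finset.mem_filter.mp this).2
          · intro h'
            have : r ∈ S.filter (· < t1) := heq.symm ▸ (Finset.mem_filter.mpr ⟨hmem, h'⟩)
            exact (Finset.mem_filter.mp this).2
        have ht1 : t1 ≠ r := fun e => h1 j (e ▸ hroot)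
        have ht2 : t2 ≠ r := fun e => h2 j (e ▸ hroot)
        rcases ha.lt_or_gt with hpos | hpos
        · -- a j < 0 : positive iff t < r
          have e1 : 0 < a j * t1 + b j ↔ t1 < r := by
            constructor
            · intro h'; by_contra hc; push_neg at hc; nlinarith
            · intro h'; nlinarith
          have e2 : 0 < a j * t2 + b j ↔ t2 < r := by
            constructor
            · intro h'; by_contra hc; push_neg at hc; nlinarith
            · intro h'; nlinarith
          rw [e1, e2]
          constructor
          · intro h'
            rcases (ht2.lt_or_gt) with h'' | h''
            · exact h''
            · exact absurd (hrt.mpr h'') (not_lt.mpr h'.le)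
          · intro h'; exact lt_of_le_of_lt hle h'
        · -- 0 < a j : positive iff r < t
          have e1 : 0 < a j * t1 + b j ↔ r < t1 := by
            constructor
            · intro h'; by_contra hc; push_neg at hc; nlinarith
            · intro h'; nlinarith
          have e2 : 0 < a j * t2 + b j ↔ r < t2 := by
            constructor
            · intro h'; by_contra hc; push_neg at hc; nlinarith
            · intro h'; nlinarith
          rw [e1, e2, hrt]
    intro t1 t2 h1 h2 hcard j
    rcases le_total t1 t2 with hle | hle
    · exact main t1 t2 hle h1 h2 hcard j
    · exact (main t2 t1 hle h2 h1 hcard.symm j).symm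
  -- build injection into Fin (n+1)
  set P := {σ : Fin n → Bool | ∃ t : ℝ, (∀ j, a j * t + b j ≠ 0) ∧
      ∀ j, σ j = decide (0 < a j * t + b j)} with hP
  have : Nat.card P ≤ Nat.card (Fin (n + 1)) := by
    apply Nat.card_le_card_of_injective
      (f := fun σ : P => (⟨(S.filter (· < σ.2.choose)).card,
        lt_of_le_of_lt (le_trans (Finset.card_filter_le _ _) hScard) (Nat.lt_succ_self n)⟩ : Fin (n+1)))
    intro σ1 σ2 hF
    have hc : (S.filter (· < σ1.2.choose)).card = (S.filter (· < σ2.2.choose)).card :=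
      congrArg Fin.val hF
    obtain ⟨hne1, hs1⟩ := σ1.2.choose_spec
    obtain ⟨hne2, hs2⟩ := σ2.2.choose_spec
    have := key _ _ hne1 hne2 hc
    apply Subtype.ext
    funext j
    rw [hs1 j, hs2 j, decide_eq_decide]
    exact this j
  simpa using this

private lemma pos_combo {x y α β : ℝ} (hα : 0 ≤ α) (hβ : 0 ≤ β) (hs : α + β = 1)
    (hx : 0 < x) (hy : 0 < y) : 0 < α * x + β * y := by
  rcases eq_or_lt_of_le hα with h | h
  · have : β = 1 := by linarith
    simp [← h, this, hy]
  · nlinarith [mul_nonneg hβ hy.le, mul_pos h hx]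

private lemma convexSign {x y : ℝ} (α β : ℝ) (hα : 0 ≤ α) (hβ : 0 ≤ β) (hs : α + β = 1)
    (hx : x ≠ 0) (hy : y ≠ 0) (hxy : 0 < x ↔ 0 < y) :
    α * x + β * y ≠ 0 ∧ (0 < α * x + β * y ↔ 0 < x) := by
  rcases hx.lt_or_gt with h | h
  · have hy' : y < 0 := hy.lt_or_gt.resolve_right fun h' => h.asymm (hxy.mpr h')
    have hneg : 0 < α * (-x) + β * (-y) := pos_combo hα hβ hs (neg_pos.2 h) (neg_pos.2 hy')
    constructor
    · intro h0; nlinarith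
    · constructor
      · intro hp; nlinarith
      · intro hp; exact absurd hp h.asymm
  · have hy' := hxy.mp h
    have hpos := pos_combo hα hβ hs h hy'
    exact ⟨hpos.ne', iff_of_true hpos h⟩

private lemma fval_combo (u : EuclideanSpace ℝ (Fin 2)) (c : ℝ) (p q : EuclideanSpace ℝ (Fin 2))
    (α β : ℝ) (h : α + β = 1) :
    ⟪α • p + β • q, u⟫ - c = α * (⟪p, u⟫ - c) + β * (⟪q, u⟫ - c) := by
  rw [inner_add_left, real_inner_smul_left, real_inner_smul_left]
  linear_combination c * h

private lemma patterns_bound : ∀ (n : ℕ) (u : Fin n → EuclideanSpace ℝ (Fin 2)) (c : Fin n → ℝ),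
    (∀ i, u i ≠ 0) →
    2 * Nat.card {σ : Fin n → Bool | ∃ p : EuclideanSpace ℝ (Fin 2),
      (∀ i, ⟪p, u i⟫ - c i ≠ 0) ∧ ∀ i, σ i = decide (0 < ⟪p, u i⟫ - c i)} ≤ n ^ 2 + n + 2 := by
  intro n
  induction n with
  | zero =>
    intro u c _
    have h1 : Nat.card {σ : Fin 0 → Bool | ∃ p : EuclideanSpace ℝ (Fin 2),
        (∀ i, ⟪p, u i⟫ - c i ≠ 0) ∧ ∀ i, σ i = decide (0 < ⟪p, u i⟫ - c i)} ≤
        Nat.card (Fin 0 → Bool) := by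
      exact Nat.card_le_card_of_injective Subtype.val Subtype.val_injective
    have h2 : Nat.card (Fin 0 → Bool) = 1 := by
      simp [Nat.card_eq_fintype_card]
    norm_num
  | succ n ih =>
    intro u c hu
    classical
    obtain ⟨p0, v, hparam⟩ := line_param (u (Fin.last n)) (hu _) (c (Fin.last n))
    set a : Fin n → ℝ := fun j => ⟪v, u j.castSucc⟫ with ha
    set b : Fin n → ℝ := fun j => ⟪p0, u j.castSucc⟫ - c j.castSucc with hb
    set P' := {σ : Fin (n+1) → Bool | ∃ p : EuclideanSpace ℝ (Fin 2),
      (∀ i, ⟪p, u i⟫ - c i ≠ 0) ∧ ∀ i, σ i = decide (0 < ⟪p, u i⟫ - c i)} with hP'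
    set Pn := {τ : Fin n → Bool | ∃ p : EuclideanSpace ℝ (Fin 2),
      (∀ j : Fin n, ⟪p, u j.castSucc⟫ - c j.castSucc ≠ 0) ∧
      ∀ j : Fin n, τ j = decide (0 < ⟪p, u j.castSucc⟫ - c j.castSucc)} with hPn'
    set Q := {τ : Fin n → Bool | ∃ t : ℝ, (∀ j, a j * t + b j ≠ 0) ∧
      ∀ j, τ j = decide (0 < a j * t + b j)} with hQ'
    have hQcard : Nat.card ↥Q ≤ n + 1 := oneD n a b
    have hPncard : 2 * Nat.card ↥Pn ≤ n ^ 2 + n + 2 :=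
      ih (fun j => u j.castSucc) (fun j => c j.castSucc) (fun j => hu _)
    -- restriction lands in Pn
    have res : ∀ σ : Fin (n+1) → Bool, σ ∈ P' → (fun j : Fin n => σ j.castSucc) ∈ Pn := by
      intro σ hσ
      obtain ⟨p, hp, hps⟩ := hσ
      exact ⟨p, fun j => hp j.castSucc, fun j => hps j.castSucc⟩
    -- the cut lemma
    have cut : ∀ σ : Fin (n+1) → Bool, σ ∈ P' →
        Function.update σ (Fin.last n) (!(σ (Fin.last n))) ∈ P' →
        σ (Fin.last n) = false → (fun j : Fin n => σ j.castSucc) ∈ Q := by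
      intro σ hσ hflip hlast
      obtain ⟨p, hp, hps⟩ := hσ
      obtain ⟨q, hq, hqs⟩ := hflip
      have hplast : ⟪p, u (Fin.last n)⟫ - c (Fin.last n) < 0 := by
        have h0 := hp (Fin.last n)
        rcases h0.lt_or_gt with h | h
        · exact h
        · have := hps (Fin.last n)
          rw [hlast, decide_eq_true h] at this
          exact absurd this.symm (by simp)
      have hqlast : 0 < ⟪q, u (Fin.last n)⟫ - c (Fin.last n) := by
        have h0 := hq (Fin.last n)
        rcases h0.lt_or_gt with h | h
        · have := hqs (Fin.last n)
          rw [Function.update_self, hlast, decide_eq_false (not_lt.mpr h.le)] at this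
          exact absurd this (by simp)
        · exact h
      have hmatch : ∀ j : Fin n,
          (0 < ⟪p, u j.castSucc⟫ - c j.castSucc ↔ 0 < ⟪q, u j.castSucc⟫ - c j.castSucc) := by
        intro j
        have h1 := hps j.castSucc
        have h2 := hqs j.castSucc
        rw [Function.update_of_ne (Fin.castSucc_lt_last j).ne, h1] at h2
        exact decide_eq_decide.mp h2
      set fp := ⟪p, u (Fin.last n)⟫ - c (Fin.last n) with hfp
      set fq := ⟪q, u (Fin.last n)⟫ - c (Fin.last n) with hfq
      have hD : 0 < fq - fp := by linarith
      have hα0 : 0 ≤ fq / (fq - fp) := div_nonneg hqlast.le hD.le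
      have hβ0 : 0 ≤ (-fp) / (fq - fp) := div_nonneg (by linarith) hD.le
      have hαβ : fq / (fq - fp) + (-fp) / (fq - fp) = 1 := by
        field_simp
        ring
      set r := (fq / (fq - fp)) • p + ((-fp) / (fq - fp)) • q with hrdef
      have hrval : ∀ w : EuclideanSpace ℝ (Fin 2), ∀ d : ℝ,
          ⟪r, w⟫ - d = (fq / (fq - fp)) * (⟪p, w⟫ - d) + ((-fp) / (fq - fp)) * (⟪q, w⟫ - d) :=
        fun w d => fval_combo w d p q _ _ hαβ
      have hronline : ⟪r, u (Fin.last n)⟫ = c (Fin.last n) := by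
        have := hrval (u (Fin.last n)) (c (Fin.last n))
        rw [← hfp, ← hfq] at this
        have hz : ⟪r, u (Fin.last n)⟫ - c (Fin.last n) = 0 := by
          rw [this]; field_simp; ring
        linarith
      obtain ⟨t, ht⟩ := hparam r hronline
      have hsign : ∀ j : Fin n, (⟪r, u j.castSucc⟫ - c j.castSucc ≠ 0) ∧
          (0 < ⟪r, u j.castSucc⟫ - c j.castSucc ↔ 0 < ⟪p, u j.castSucc⟫ - c j.castSucc) := by
        intro j
        rw [hrval (u j.castSucc) (c j.castSucc)]
        exact convexSign _ _ hα0 hβ0 hαβ (hp j.castSucc) (hq j.castSucc) (hmatch j)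
      have hval : ∀ j : Fin n, a j * t + b j = ⟪r, u j.castSucc⟫ - c j.castSucc := by
        intro j
        rw [← ht, inner_add_left, real_inner_smul_left, ha, hb]
        ring
      refine ⟨t, fun j => ?_, fun j => ?_⟩
      · rw [hval j]; exact (hsign j).1
      · show σ j.castSucc = decide (0 < a j * t + b j)
        rw [hval j, hps j.castSucc, decide_eq_decide]
        exact ((hsign j).2).symm
    -- the injection
    have hinj : ∃ Θ : ↥P' → ↥Pn ⊕ ↥Q, Function.Injective Θ := by
      refine ⟨fun σ => if h : (Function.update σ.1 (Fin.last n) (!(σ.1 (Fin.last n))) ∈ P') ∧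
          σ.1 (Fin.last n) = false
        then Sum.inr ⟨fun j => σ.1 j.castSucc, cut σ.1 σ.2 h.1 h.2⟩
        else Sum.inl ⟨fun j => σ.1 j.castSucc, res σ.1 σ.2⟩, ?_⟩
      intro σ1 σ2 hEq
      have ext2 : (∀ j : Fin n, σ1.1 j.castSucc = σ2.1 j.castSucc) →
          σ1.1 (Fin.last n) = σ2.1 (Fin.last n) → σ1 = σ2 := by
        intro hcs hl
        apply Subtype.ext
        funext i
        refine Fin.lastCases ?_ ?_ i
        · exact hl
        · exact hcs
      dsimp only at hEq
      split_ifs at hEq with h1 h2 h2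
      all_goals try exact Sum.noConfusion hEq
      · -- both inr
        have hτ := congrArg Subtype.val (Sum.inr.inj hEq)
        exact ext2 (fun j => congrFun hτ j) (h1.2.trans h2.2.symm)
      · -- both inl
        have hτ := congrArg Subtype.val (Sum.inl.inj hEq)
        have hcs : ∀ j : Fin n, σ1.1 j.castSucc = σ2.1 j.castSucc := fun j => congrFun hτ j
        by_cases hlast : σ1.1 (Fin.last n) = σ2.1 (Fin.last n)
        · exact ext2 hcs hlast
        · exfalso
          have hflip12 : Function.update σ1.1 (Fin.last n) (!(σ1.1 (Fin.last n))) = σ2.1 := by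
            funext i
            refine Fin.lastCases ?_ ?_ i
            · rw [Function.update_self]
              revert hlast
              cases σ1.1 (Fin.last n) <;> cases σ2.1 (Fin.last n) <;> simp
            · intro j
              rw [Function.update_of_ne (Fin.castSucc_lt_last j).ne]
              exact hcs j
          have hflip21 : Function.update σ2.1 (Fin.last n) (!(σ2.1 (Fin.last n))) = σ1.1 := by
            funext i
            refine Fin.lastCases ?_ ?_ i
            · rw [Function.update_self]
              revert hlast
              cases σ1.1 (Fin.last n) <;> cases σ2.1 (Fin.last n) <;> simp
            · intro j
              rw [Function.update_of_ne (Fin.castSucc_lt_last j).ne]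
              exact (hcs j).symm
          have ht1 : σ1.1 (Fin.last n) = true := by
            by_contra hc
            exact h1 ⟨hflip12 ▸ σ2.2, Bool.eq_false_iff.mpr hc⟩
          have ht2 : σ2.1 (Fin.last n) = true := by
            by_contra hc
            exact h2 ⟨hflip21 ▸ σ1.2, Bool.eq_false_iff.mpr hc⟩
          exact hlast (ht1.trans ht2.symm)
    obtain ⟨Θ, hΘ⟩ := hinj
    have hle : Nat.card ↥P' ≤ Nat.card (↥Pn ⊕ ↥Q) := Nat.card_le_card_of_injective Θ hΘ
    rw [Nat.card_sum] at hle
    have hsq : (n + 1) ^ 2 = n ^ 2 + 2 * n + 1 := by ring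
    omega

/-- A line in the plane: `{p | ⟪p, u⟫ = c}` for some nonzero `u` and real `c`. -/
def IsLine (L : Set (EuclideanSpace ℝ (Fin 2))) : Prop :=
  ∃ u : EuclideanSpace ℝ (Fin 2), u ≠ 0 ∧ ∃ c : ℝ, L = {p | ⟪p, u⟫ = c}

/-- The complement in `ℝ²` of the union of `m` distinct lines has at most
`(m² + m + 2)/2` connected components. -/
theorem components_of_line_complement_le (m : ℕ)
    (L : Fin m → Set (EuclideanSpace ℝ (Fin 2)))
    (hL : ∀ i, IsLine (L i)) (hdist : Function.Injective L) :
    Finite (ConnectedComponents ↥((⋃ i, L i)ᶜ)) ∧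
      Nat.card (ConnectedComponents ↥((⋃ i, L i)ᶜ)) ≤ (m ^ 2 + m + 2) / 2 := by
  classical
  choose u hu c hLc using hL
  set U : Set (EuclideanSpace ℝ (Fin 2)) := (⋃ i, L i)ᶜ with hUdef
  have hmemU : ∀ p : EuclideanSpace ℝ (Fin 2), p ∈ U ↔ ∀ i, ⟪p, u i⟫ - c i ≠ 0 := by
    intro p
    simp [hUdef, hLc, sub_ne_zero]
  set P := {σ : Fin m → Bool | ∃ p : EuclideanSpace ℝ (Fin 2),
    (∀ i, ⟪p, u i⟫ - c i ≠ 0) ∧ ∀ i, σ i = decide (0 < ⟪p, u i⟫ - c i)} with hP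
  have hsame : ∀ p q : ↥U,
      (∀ i, decide (0 < ⟪p.1, u i⟫ - c i) = decide (0 < ⟪q.1, u i⟫ - c i)) →
      ((p : ConnectedComponents ↥U) = (q : ConnectedComponents ↥U)) := by
    intro p q hpq
    have hseg : segment ℝ p.1 q.1 ⊆ U := by
      intro x hx
      obtain ⟨α, β, hα, hβ, hαβ, hxe⟩ := hx
      rw [hmemU]
      intro i
      have hcs := convexSign (x := ⟪p.1, u i⟫ - c i) (y := ⟪q.1, u i⟫ - c i) α β hα hβ hαβ
        ((hmemU p.1).mp p.2 i) ((hmemU q.1).mp q.2 i) (decide_eq_decide.mp (hpq i))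
      rw [← hxe, fval_combo _ _ _ _ _ _ hαβ]
      exact hcs.1
    have hJ : JoinedIn U p.1 q.1 := by
      have hconv : Convex ℝ (segment ℝ p.1 q.1) := convex_segment _ _
      have hpc := hconv.isPathConnected ⟨p.1, left_mem_segment ℝ _ _⟩
      exact (hpc.joinedIn p.1 (left_mem_segment ℝ _ _) q.1 (right_mem_segment ℝ _ _)).mono hseg
    have hJo : Joined p q := hJ.joined_subtype
    rw [ConnectedComponents.coe_eq_coe]
    exact connectedComponent_eq (pathComponent_subset_component _ hJo)
  have hGinj : ∃ G : ConnectedComponents ↥U → ↥P, Function.Injective G := by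
    refine ⟨fun cc =>
      ⟨fun i => decide (0 < ⟪((ConnectedComponents.surjective_coe cc).choose : ↥U).1, u i⟫ - c i),
        ⟨_, (hmemU _).mp (ConnectedComponents.surjective_coe cc).choose.2, fun i => rfl⟩⟩, ?_⟩
    intro c1 c2 hEq
    have h1 := (ConnectedComponents.surjective_coe c1).choose_spec
    have h2 := (ConnectedComponents.surjective_coe c2).choose_spec
    rw [← h1, ← h2]
    apply hsame
    intro i
    exact congrFun (congrArg Subtype.val hEq) i
  obtain ⟨G, hG⟩ := hGinj
  have hfin : Finite (ConnectedComponents ↥U) := Finite.of_injective G hG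
  refine ⟨hfin, ?_⟩
  have h1 : Nat.card (ConnectedComponents ↥U) ≤ Nat.card ↥P :=
    Nat.card_le_card_of_injective G hG
  have h2 := patterns_bound m u c hu
  rw [← hP] at h2
  obtain ⟨M, hM⟩ : ∃ M, m ^ 2 = M := ⟨_, rfl⟩
  rw [hM] at h2 ⊢
  omega
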